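/- Let V be an n-dimensional real vector space and let (F,G,H) be a transverse triple of complete flags in V. Then the family of eruption endomorphisms {A^{i,j,k}_{F,G,H} : i,j,k integers with i,j,k ≥ 1 and i+j+k = n}, indexed by the (n−1)(n−2)/2 such triples (i,j,k), is linearly independent in the space of linear endomorphisms of V. -/

import Mathlib

/-- `F` is a complete flag in an `n`-dimensional real vector space:
`F 0 ⊆ F 1 ⊆ ⋯ ⊆ F n` with `dim (F l) = l` for `0 ≤ l ≤ n`. -/
def IsFlag (n : ℕ) {V : Type*} [AddCommGroup V] [Module ℝ V]
    (F : ℕ → Submodule ℝ V) : Prop :=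
  (∀ l, l < n → F l ≤ F (l + 1)) ∧ ∀ l, l ≤ n → Module.finrank ℝ (F l) = l

/-- A triple of flags is transverse if `F a + G b + H c = V` whenever `a + b + c = n`. -/
def TransverseTriple (n : ℕ) {V : Type*} [AddCommGroup V] [Module ℝ V]
    (F G H : ℕ → Submodule ℝ V) : Prop :=
  ∀ a b c : ℕ, a + b + c = n → F a ⊔ G b ⊔ H c = ⊤

/-- A pair of flags is transverse if `F a + G (n - a) = V` for all `0 ≤ a ≤ n`. -/
def TransversePair (n : ℕ) {V : Type*} [AddCommGroup V] [Module ℝ V]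
    (F G : ℕ → Submodule ℝ V) : Prop :=
  ∀ a, a ≤ n → F a ⊔ G (n - a) = ⊤

/-- `A` is the `(i,j,k)`-eruption endomorphism of the triple `(F,G,H)`: it acts as the
scalar `(n - i)/n` on `F i` and as the scalar `-i/n` on `G j + H k`. -/
def IsEruption (n i j k : ℕ) {V : Type*} [AddCommGroup V] [Module ℝ V]
    (F G H : ℕ → Submodule ℝ V) (A : Module.End ℝ V) : Prop :=
  (∀ v ∈ F i, A v = (((n : ℝ) - (i : ℝ)) / (n : ℝ)) • v) ∧
  (∀ v ∈ G j ⊔ H k, A v = (-(i : ℝ) / (n : ℝ)) • v)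

/-- `A` is the `(i, n-i)`-shearing endomorphism of the pair `(F,G)`: it acts as the
scalar `(n - i)/n` on `F i` and as the scalar `-i/n` on `G (n - i)`. -/
def IsShearing (n i : ℕ) {V : Type*} [AddCommGroup V] [Module ℝ V]
    (F G : ℕ → Submodule ℝ V) (A : Module.End ℝ V) : Prop :=
  (∀ v ∈ F i, A v = (((n : ℝ) - (i : ℝ)) / (n : ℝ)) • v) ∧
  (∀ v ∈ G (n - i), A v = (-(i : ℝ) / (n : ℝ)) • v)

section EruptionAux
variable {V : Type*} [AddCommGroup V] [Module ℝ V]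

lemma flag_mono' {n : ℕ} {F : ℕ → Submodule ℝ V} (hF : IsFlag n F) :
    ∀ a b, a ≤ b → b ≤ n → F a ≤ F b := by
  intro a b hab hbn
  induction b with
  | zero => obtain rfl : a = 0 := Nat.le_zero.mp hab; exact le_rfl
  | succ b ih =>
    rcases eq_or_lt_of_le hab with rfl | h
    · exact le_rfl
    · exact (ih (by omega) (by omega)).trans (hF.1 b (by omega))

lemma exists_dual_of_not_mem' (W : Submodule ℝ V) {f : V} (hf : f ∉ W) :
    ∃ φ : V →ₗ[ℝ] ℝ, (∀ x ∈ W, φ x = 0) ∧ φ f = 1 := by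
  have h : W.mkQ f ≠ 0 := by
    simpa [Submodule.mkQ_apply, Submodule.Quotient.mk_eq_zero] using hf
  obtain ⟨ψ, hψ⟩ : ∃ ψ : Module.Dual ℝ (V ⧸ W), ψ (W.mkQ f) ≠ 0 := by
    by_contra hc
    push_neg at hc
    exact h ((Module.forall_dual_apply_eq_zero_iff ℝ _).mp hc)
  refine ⟨(ψ (W.mkQ f))⁻¹ • (ψ ∘ₗ W.mkQ), ?_, ?_⟩
  · intro x hx
    have : W.mkQ x = 0 := by simpa [Submodule.mkQ_apply, Submodule.Quotient.mk_eq_zero] using hx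
    simp [this]
  · simp only [LinearMap.smul_apply, LinearMap.coe_comp, Function.comp_apply, smul_eq_mul]
    exact inv_mul_cancel₀ hψ

lemma erup_decomp' {n i j k : ℕ} {F G H : ℕ → Submodule ℝ V} {A : Module.End ℝ V}
    (hE : IsEruption n i j k F G H A) (hn : (n : ℝ) ≠ 0) {v x w : V}
    (hx : x ∈ F i) (hw : w ∈ G j ⊔ H k) (hv : x + w = v) :
    A v + ((i : ℝ) / (n : ℝ)) • v = x := by
  have e1 := hE.1 x hx
  have e2 := hE.2 w hw
  subst hv
  rw [map_add, e1, e2]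
  match_scalars <;> field_simp <;> ring

lemma finrank_sup_le'' [FiniteDimensional ℝ V] (U W : Submodule ℝ V) :
    Module.finrank ℝ ↥(U ⊔ W) ≤ Module.finrank ℝ U + Module.finrank ℝ W := by
  have := Submodule.finrank_sup_add_finrank_inf_eq U W
  omega

end EruptionAux

theorem statement4 (n : ℕ) (V : Type*) [AddCommGroup V] [Module ℝ V] [FiniteDimensional ℝ V]
    (hV : Module.finrank ℝ V = n)
    (F G H : ℕ → Submodule ℝ V) (hF : IsFlag n F) (hG : IsFlag n G) (hH : IsFlag n H)
    (hFGH : TransverseTriple n F G H)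
    (A : ℕ → ℕ → ℕ → Module.End ℝ V)
    (hA : ∀ i j k : ℕ, 1 ≤ i → 1 ≤ j → 1 ≤ k → i + j + k = n →
      IsEruption n i j k F G H (A i j k)) :
    LinearIndependent ℝ
      (fun p : {p : ℕ × ℕ × ℕ // 1 ≤ p.1 ∧ 1 ≤ p.2.1 ∧ 1 ≤ p.2.2 ∧ p.1 + p.2.1 + p.2.2 = n} =>
        A p.1.1 p.1.2.1 p.1.2.2) := by
  classical
  rw [linearIndependent_iff']
  intro s g hsum
  have Fmono := flag_mono' hF
  have Gmono := flag_mono' hG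
  have sup3 : ∀ a b c : ℕ, a + b + c = n → F a ⊔ (G b ⊔ H c) = ⊤ := by
    intro a b c h
    rw [← sup_assoc]
    exact hFGH a b c h
  have hF0 : F 0 = ⊥ := Submodule.finrank_eq_zero.mp (hF.2 0 (Nat.zero_le n))
  suffices key : ∀ m : ℕ, ∀ p ∈ s, (n - p.1.1) * (n + 1) + p.1.2.1 ≤ m → g p = 0 by
    intro p hp
    exact key _ p hp le_rfl
  intro m
  induction m using Nat.strong_induction_on with
  | _ m IH =>
  rintro ⟨⟨i, j, k⟩, hi, hj, hk, hijk⟩ hp hkey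
  dsimp only at hi hj hk hijk hkey ⊢
  have hn3 : 3 ≤ n := by omega
  have hnR : (n : ℝ) ≠ 0 := Nat.cast_ne_zero.mpr (by omega)
  -- the sum of coefficients weighted by i vanishes
  have hsum_i : ∑ q ∈ s, g q * (q.1.1 : ℝ) = 0 := by
    have hG1 : G 1 ≠ ⊥ := by
      intro hb
      have h1 := hG.2 1 (by omega)
      rw [hb] at h1
      simp at h1
    obtain ⟨u, huG, hu0⟩ := (Submodule.ne_bot_iff _).mp hG1
    have happ := LinearMap.congr_fun hsum u
    simp only [LinearMap.coe_sum, Finset.sum_apply, LinearMap.smul_apply,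
      LinearMap.zero_apply] at happ
    have heach : ∀ q ∈ s, g q • (A q.1.1 q.1.2.1 q.1.2.2 u)
        = (g q * (-(q.1.1 : ℝ) / (n : ℝ))) • u := by
      rintro ⟨⟨a, b, c⟩, ha, hb, hc, habc⟩ _
      dsimp only at ha hb hc habc ⊢
      have hE := hA a b c ha hb hc habc
      have hmem : u ∈ G b ⊔ H c :=
        Submodule.mem_sup_left (Gmono 1 b hb (by omega) huG)
      rw [hE.2 u hmem, smul_smul]
    rw [Finset.sum_congr rfl heach, ← Finset.sum_smul] at happ
    have hc0 : ∑ q ∈ s, g q * (-(q.1.1 : ℝ) / (n : ℝ)) = 0 := by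
      rcases smul_eq_zero.mp happ with h | h
      · exact h
      · exact absurd h hu0
    have h2 : ∑ q ∈ s, g q * (-(q.1.1 : ℝ) / (n : ℝ))
        = (-1 / (n : ℝ)) * ∑ q ∈ s, g q * (q.1.1 : ℝ) := by
      rw [Finset.mul_sum]
      exact Finset.sum_congr rfl fun q _ => by ring
    rw [h2] at hc0
    rcases mul_eq_zero.mp hc0 with h | h
    · exact absurd h (by simp [hnR])
    · exact h
  -- triviality of G j ⊓ H (n - j)
  have hGH_bot : G j ⊓ H (n - j) = ⊥ := by
    have hsupT : G j ⊔ H (n - j) = ⊤ := by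
      have h0 := sup3 0 j (n - j) (by omega)
      rwa [hF0, bot_sup_eq] at h0
    have hrk := Submodule.finrank_sup_add_finrank_inf_eq (G j) (H (n - j))
    rw [hsupT, finrank_top, hV, hG.2 j (by omega), hH.2 (n - j) (by omega)] at hrk
    exact Submodule.finrank_eq_zero.mp (by omega)
  -- choose v nonzero in G (j+1) ⊓ H (n - j)
  obtain ⟨v, hvmem, hv0⟩ : ∃ v, v ∈ G (j + 1) ⊓ H (n - j) ∧ v ≠ 0 := by
    have hrk := Submodule.finrank_sup_add_finrank_inf_eq (G (j + 1)) (H (n - j))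
    rw [hG.2 (j + 1) (by omega), hH.2 (n - j) (by omega)] at hrk
    have h1 : Module.finrank ℝ ↥(G (j + 1) ⊔ H (n - j)) ≤ n := hV ▸ Submodule.finrank_le _
    have : G (j + 1) ⊓ H (n - j) ≠ ⊥ := by
      intro hb
      rw [hb] at hrk
      simp only [finrank_bot] at hrk
      omega
    exact (Submodule.ne_bot_iff _).mp this
  have hvG : v ∈ G (j + 1) := hvmem.1
  have hvH : v ∈ H (n - j) := hvmem.2
  -- decompose v with respect to F i ⊕ (G j ⊔ H k)
  obtain ⟨x, hx, w, hw, hxw⟩ := Submodule.mem_sup.mp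
    (by rw [sup3 i j k hijk]; exact Submodule.mem_top : v ∈ F i ⊔ (G j ⊔ H k))
  -- the F-component x is not in F (i-1)
  have hxnot : x ∉ F (i - 1) := by
    intro hxe
    have hvD : v ∈ F (i - 1) ⊔ (G j ⊔ H k) := by
      rw [← hxw]
      exact Submodule.add_mem _ (Submodule.mem_sup_left hxe) (Submodule.mem_sup_right hw)
    set D := F (i - 1) ⊔ (G j ⊔ H k) with hD
    have hsub1 : F (i - 1) ≤ D := le_sup_left
    have hsub2 : G j ⊔ H k ≤ D := le_sup_right
    have hsub3 : D ≤ G (j + 1) ⊔ D := le_sup_right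
    have hDsup : G (j + 1) ⊔ D = ⊤ := by
      rw [eq_top_iff, ← sup3 (i - 1) (j + 1) k (by omega)]
      refine sup_le ?_ (sup_le ?_ ?_)
      · exact le_trans hsub1 hsub3
      · exact le_sup_left
      · exact le_trans (le_trans (le_sup_right : H k ≤ G j ⊔ H k) hsub2) hsub3
    have hD1 : Module.finrank ℝ D ≤ (i - 1) + (j + k) := by
      calc Module.finrank ℝ D
          ≤ Module.finrank ℝ (F (i - 1)) + Module.finrank ℝ ↥(G j ⊔ H k) :=
            finrank_sup_le'' _ _
        _ ≤ (i - 1) + (j + k) := by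
            have h2 := finrank_sup_le'' (G j) (H k)
            rw [hG.2 j (by omega), hH.2 k (by omega)] at h2
            rw [hF.2 (i - 1) (by omega)]
            omega
    have hrk2 := Submodule.finrank_sup_add_finrank_inf_eq (G (j + 1)) D
    rw [hDsup, finrank_top, hV, hG.2 (j + 1) (by omega)] at hrk2
    have hinfle : Module.finrank ℝ ↥(G (j + 1) ⊓ D) ≤ j := by omega
    have hle : G j ≤ G (j + 1) ⊓ D :=
      le_inf (Gmono j (j + 1) (by omega) (by omega))
        ((le_sup_left : G j ≤ G j ⊔ H k).trans le_sup_right)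
    have heq : G j = G (j + 1) ⊓ D :=
      Submodule.eq_of_le_of_finrank_le hle (by rw [hG.2 j (by omega)]; exact hinfle)
    have hvGj : v ∈ G j := by
      rw [heq]
      exact ⟨hvG, hvD⟩
    have : v ∈ G j ⊓ H (n - j) := ⟨hvGj, hvH⟩
    rw [hGH_bot] at this
    exact hv0 this
  obtain ⟨φ, hφ0, hφf⟩ := exists_dual_of_not_mem' (F (i - 1)) hxnot
  -- evaluate the linear relation at v and apply φ
  have happv := LinearMap.congr_fun hsum v
  simp only [LinearMap.coe_sum, Finset.sum_apply, LinearMap.smul_apply,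
    LinearMap.zero_apply] at happv
  have hphi : ∑ q ∈ s, g q * φ (A q.1.1 q.1.2.1 q.1.2.2 v) = 0 := by
    have := congrArg φ happv
    rw [map_sum] at this
    simpa only [map_smul, smul_eq_mul, map_zero] using this
  have hmain : ∑ q ∈ s,
      g q * φ (A q.1.1 q.1.2.1 q.1.2.2 v + ((q.1.1 : ℝ) / (n : ℝ)) • v) = 0 := by
    have hexp : ∀ q ∈ s,
        g q * φ (A q.1.1 q.1.2.1 q.1.2.2 v + ((q.1.1 : ℝ) / (n : ℝ)) • v)
          = g q * φ (A q.1.1 q.1.2.1 q.1.2.2 v) + (g q * (q.1.1 : ℝ)) * (φ v / (n : ℝ)) := by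
      intro q _
      rw [map_add, map_smul, smul_eq_mul]
      ring
    rw [Finset.sum_congr rfl hexp, Finset.sum_add_distrib, hphi, ← Finset.sum_mul, hsum_i]
    ring
  -- off-diagonal terms vanish
  have hoff : ∀ q ∈ s,
      q ≠ (⟨(i, j, k), hi, hj, hk, hijk⟩ :
        {p : ℕ × ℕ × ℕ // 1 ≤ p.1 ∧ 1 ≤ p.2.1 ∧ 1 ≤ p.2.2 ∧ p.1 + p.2.1 + p.2.2 = n}) →
      g q * φ (A q.1.1 q.1.2.1 q.1.2.2 v + ((q.1.1 : ℝ) / (n : ℝ)) • v) = 0 := by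
    rintro ⟨⟨a, b, c⟩, ha, hb, hc, habc⟩ hqs hqne
    dsimp only at ha hb hc habc ⊢
    have hE := hA a b c ha hb hc habc
    rcases lt_trichotomy a i with hlt | heq | hgt
    · -- a < i : the F-part lands in F (i-1) ⊆ ker φ
      obtain ⟨y, hy, z, hz, hyz⟩ := Submodule.mem_sup.mp
        (by rw [sup3 a b c habc]; exact Submodule.mem_top : v ∈ F a ⊔ (G b ⊔ H c))
      rw [erup_decomp' hE hnR hy hz hyz, hφ0 y (Fmono a (i - 1) (by omega) (by omega) hy),
        mul_zero]
    · subst heq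
      rcases lt_trichotomy b j with hbj | heqb | hbj
      · -- b < j : coefficient vanishes by induction
        have hlt2 : (n - a) * (n + 1) + b < m := by
          have : (n - a) * (n + 1) + b < (n - a) * (n + 1) + j := by omega
          omega
        have := IH ((n - a) * (n + 1) + b) hlt2 ⟨(a, b, c), ha, hb, hc, habc⟩ hqs le_rfl
        rw [this, zero_mul]
      · -- b = j forces q = p
        exfalso
        apply hqne
        subst heqb
        have : c = k := by omega
        subst this
        rfl
      · -- b > j : v ∈ G b ⊔ H c so the F-part is 0
        have hmem : v ∈ G b ⊔ H c :=
          Submodule.mem_sup_left (Gmono (j + 1) b (by omega) (by omega) hvG)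
        rw [hE.2 v hmem, ← add_smul]
        have : -(a : ℝ) / (n : ℝ) + (a : ℝ) / (n : ℝ) = 0 := by ring
        rw [this, zero_smul, map_zero, mul_zero]
    · -- a > i : coefficient vanishes by induction
      have hlt2 : (n - a) * (n + 1) + b < m := by
        have h1 : (n - a) * (n + 1) + b < (n - i) * (n + 1) + j := by
          have e2 : b ≤ n := by omega
          calc (n - a) * (n + 1) + b ≤ (n - a) * (n + 1) + n := by omega
            _ < (n - a) * (n + 1) + (n + 1) := by omega
            _ = ((n - a) + 1) * (n + 1) := by ring
            _ ≤ (n - i) * (n + 1) := Nat.mul_le_mul_right _ (by omega)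
            _ ≤ (n - i) * (n + 1) + j := Nat.le_add_right _ _
        omega
      have := IH ((n - a) * (n + 1) + b) hlt2 ⟨(a, b, c), ha, hb, hc, habc⟩ hqs le_rfl
      rw [this, zero_mul]
  have hsingle := Finset.sum_eq_single_of_mem _ hp hoff
  rw [hsingle] at hmain
  simp only at hmain
  rw [erup_decomp' (hA i j k hi hj hk hijk) hnR hx hw hxw, hφf, mul_one] at hmain
  exact hmain
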